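/- Let f(x) ∈ ℚ[x] be irreducible with root α, and let h(x) ∈ ℚ[x]. Then f(h(x)) is reducible over ℚ if and only if h(x) − α is reducible over ℚ(α). -/

import Mathlib

open Polynomial IntermediateField

/-- If `x` is a root of a nonzero polynomial `p` whose degree equals the degree of the
minimal polynomial of `x`, then `p` is irreducible. -/
lemma aux_irreducible_of_root_of_natDegree {F B : Type*} [Field F] [Ring B] [IsDomain B]
    [Algebra F B] (p : F[X]) (x : B) (hp : p ≠ 0) (hx : Polynomial.aeval x p = 0)
    (hdeg : (minpoly F x).natDegree = p.natDegree) : Irreducible p := by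
  have hint : IsIntegral F x := (IsAlgebraic.isIntegral ⟨p, hp, hx⟩)
  obtain ⟨q, hq⟩ := minpoly.dvd F x hx
  have hmin0 : minpoly F x ≠ 0 := minpoly.ne_zero hint
  have hq0 : q ≠ 0 := by rintro rfl; rw [mul_zero] at hq; exact hp hq
  have hqd : q.natDegree = 0 := by
    have := hdeg
    rw [hq, natDegree_mul hmin0 hq0] at this
    omega
  obtain ⟨c, hc⟩ := natDegree_eq_zero.mp hqd
  have hcu : IsUnit q := by
    rw [← hc]
    exact isUnit_C.mpr (isUnit_iff_ne_zero.mpr (by rintro rfl; simp at hc; exact hq0 hc.symm))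
  have hassoc : Associated (minpoly F x) p := ⟨hcu.unit, by rw [IsUnit.unit_spec, ← hq]⟩
  exact hassoc.irreducible (minpoly.irreducible hint)

/-- If `x` is a root of an irreducible polynomial `p`, the minimal polynomial of `x`
has the same degree. -/
lemma aux_natDegree_minpoly {F B : Type*} [Field F] [Ring B] [IsDomain B] [Algebra F B]
    {p : F[X]} {x : B} (hp1 : Irreducible p) (hp2 : Polynomial.aeval x p = 0) :
    (minpoly F x).natDegree = p.natDegree := by
  rw [← minpoly.eq_of_irreducible hp1 hp2]
  exact natDegree_mul_C (inv_ne_zero (leadingCoeff_ne_zero.mpr hp1.ne_zero))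

set_option synthInstance.maxHeartbeats 1000000 in
theorem stmt_9 (f : Polynomial ℚ) (hirr : Irreducible f) (α : ℂ)
    (hα : Polynomial.aeval α f = 0) (h : Polynomial ℚ) :
    ¬ Irreducible (f.comp h) ↔
      ¬ Irreducible (h.map (algebraMap ℚ ℚ⟮α⟯) -
        C (⟨α, IntermediateField.mem_adjoin_simple_self ℚ α⟩ : ℚ⟮α⟯)) := by
  set a : ℚ⟮α⟯ := ⟨α, IntermediateField.mem_adjoin_simple_self ℚ α⟩ with ha
  set h' : (ℚ⟮α⟯ : IntermediateField ℚ ℂ)[X] := h.map (algebraMap ℚ ℚ⟮α⟯) - C a with hh'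
  have hf0 : f ≠ 0 := hirr.ne_zero
  have hfd : 0 < f.natDegree := hirr.natDegree_pos
  rcases Nat.eq_zero_or_pos h.natDegree with hd0 | hdpos
  · -- constant case: both sides are constants, hence not irreducible
    obtain ⟨c, rfl⟩ := natDegree_eq_zero.mp hd0
    refine iff_of_true ?_ ?_
    · rw [comp_C]; exact not_irreducible_C _
    · rw [hh', map_C, ← C_sub]; exact not_irreducible_C _
  · -- main case
    have αint : IsIntegral ℚ α := (IsAlgebraic.isIntegral ⟨f, hf0, hα⟩)
    have minα : (minpoly ℚ α).natDegree = f.natDegree := aux_natDegree_minpoly hirr hα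
    have frK : Module.finrank ℚ ℚ⟮α⟯ = f.natDegree := by
      rw [IntermediateField.adjoin.finrank αint, minα]
    -- degree of h'
    have h'd : h'.natDegree = h.natDegree := by
      rw [hh', natDegree_sub_C, natDegree_map]
    have h'0 : h' ≠ 0 := fun e => by rw [e] at h'd; simp at h'd; omega
    -- find a root β of h' in ℂ
    obtain ⟨β, hβ⟩ := IsAlgClosed.exists_aeval_eq_zero ℂ h'
      (by rw [degree_eq_natDegree h'0, h'd]; exact_mod_cast by omega)
    have hav : Polynomial.aeval β h' = Polynomial.aeval β h - α := by
      rw [hh', map_sub, aeval_C, aeval_map_algebraMap]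
      rfl
    have hβh : Polynomial.aeval β h = α := by
      have := hβ; rw [hav] at this; exact sub_eq_zero.mp this
    have hβf : Polynomial.aeval β (f.comp h) = 0 := by
      rw [aeval_comp, hβh, hα]
    have fh0 : f.comp h ≠ 0 := fun e => by
      have := natDegree_comp (p := f) (q := h)
      rw [e, natDegree_zero] at this
      exact absurd this.symm (by positivity)
    have βint : IsIntegral ℚ β := (IsAlgebraic.isIntegral ⟨f.comp h, fh0, hβf⟩)
    have βintK : IsIntegral (ℚ⟮α⟯ : IntermediateField ℚ ℂ) β := βint.tower_top
    -- α ∈ ℚ⟮β⟯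
    have hαmem : α ∈ (ℚ⟮β⟯ : IntermediateField ℚ ℂ) := by
      rw [← hβh]
      exact IntermediateField.algebra_adjoin_le_adjoin ℚ {β}
        (aeval_mem_adjoin_singleton ℚ β (p := h))
    -- tower of fields
    have e1 : (ℚ⟮α⟯⟮β⟯ : IntermediateField ℚ⟮α⟯ ℂ).restrictScalars ℚ = ℚ⟮β⟯ := by
      erw [adjoin_simple_adjoin_simple]
      apply le_antisymm
      · rw [adjoin_le_iff]
        rintro x (rfl | rfl)
        · exact hαmem
        · exact mem_adjoin_simple_self ℚ x
      · exact adjoin.mono _ _ _ (by simp)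
    have e2 : Module.finrank ℚ ℚ⟮α⟯ * Module.finrank ℚ⟮α⟯ ℚ⟮α⟯⟮β⟯ =
        Module.finrank ℚ ((ℚ⟮α⟯⟮β⟯ : IntermediateField ℚ⟮α⟯ ℂ).restrictScalars ℚ) :=
      Module.finrank_mul_finrank ℚ ℚ⟮α⟯ ℚ⟮α⟯⟮β⟯
    have key : (minpoly ℚ β).natDegree = f.natDegree * (minpoly ℚ⟮α⟯ β).natDegree := by
      rw [← IntermediateField.adjoin.finrank βint, ← IntermediateField.adjoin.finrank βintK,
        ← frK, e2, e1]
    have hβ' : Polynomial.aeval β h' = 0 := hβ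
    rw [not_iff_not]
    constructor
    · intro hi
      have d1 : (minpoly ℚ β).natDegree = f.natDegree * h.natDegree := by
        rw [aux_natDegree_minpoly hi hβf, natDegree_comp]
      have d2 : (minpoly ℚ⟮α⟯ β).natDegree = h'.natDegree := by
        rw [h'd]
        exact Nat.eq_of_mul_eq_mul_left hfd (by rw [← key, d1])
      exact aux_irreducible_of_root_of_natDegree h' β h'0 hβ' d2
    · intro hi
      have d2 : (minpoly ℚ⟮α⟯ β).natDegree = h.natDegree := by
        rw [aux_natDegree_minpoly hi hβ', h'd]
      have d1 : (minpoly ℚ β).natDegree = (f.comp h).natDegree := by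
        rw [key, d2, natDegree_comp]
      exact aux_irreducible_of_root_of_natDegree (f.comp h) β fh0 hβf d1
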